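/- Let s, σ ∈ ℝ. Set u = cos σ·k − sin σ·j (this is e^{σi}k), h = cos σ·j + sin σ·k (this is e^{σi}j), a = i, f = i, q = exp(s·h), p = exp(s·h) * exp((s·cos σ)·u) * exp(−s·h), and b = exp(s·h) * exp((−σ)·u) * i * exp(−s·h). Then: (1) im(f*a⁻¹*h) = h, so q = exp(s·im(f*a⁻¹*h)); (2) p = exp(s·im(b*h)); (3) re(q⁻¹ * p⁻¹ * h * p * q * star(h) * a) = 0; (4) re(h * star(a)) = 0; (5) re(b * a⁻¹) = cos(2s)·cos σ; (6) re(b * star(h)) = −sin σ. (Lemma 7.3 of the paper, bypass case: the given circle of quaternion tuples satisfies the perturbation conditions and the bypass equations G' = (0,0), and realizes the stated characters; it parameterizes K'_s, the preimage of the bottom edge of the pillowcase in N'_s.) -/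

import Mathlib

open Quaternion

/-- The imaginary unit `i` of the quaternions. -/
noncomputable def qi : ℍ[ℝ] := ⟨0, 1, 0, 0⟩
/-- The imaginary unit `j` of the quaternions. -/
noncomputable def qj : ℍ[ℝ] := ⟨0, 0, 1, 0⟩
/-- The imaginary unit `k` of the quaternions. -/
noncomputable def qk : ℍ[ℝ] := ⟨0, 0, 0, 1⟩

/-- A quaternion given by its four components. -/
noncomputable def mkH (a b c d : ℝ) : ℍ[ℝ] := ⟨a, b, c, d⟩

@[simp] lemma mkH_re (a b c d : ℝ) : (mkH a b c d).re = a := rfl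
@[simp] lemma mkH_imI (a b c d : ℝ) : (mkH a b c d).imI = b := rfl
@[simp] lemma mkH_imJ (a b c d : ℝ) : (mkH a b c d).imJ = c := rfl
@[simp] lemma mkH_imK (a b c d : ℝ) : (mkH a b c d).imK = d := rfl
lemma qi_eq : qi = mkH 0 1 0 0 := rfl
lemma qj_eq : qj = mkH 0 0 1 0 := rfl
lemma qk_eq : qk = mkH 0 0 0 1 := rfl

lemma exp_pure' (t : ℝ) (v : ℍ[ℝ]) (h0 : v.re = 0) (h1 : ‖v‖ = 1) :
    NormedSpace.exp (t • v) = (Real.cos t : ℍ[ℝ]) + Real.sin t • v := by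
  rcases eq_or_ne t 0 with rfl | ht
  · simp
  · rw [Quaternion.exp_of_re_eq_zero (t • v) (by simp [h0])]
    rw [norm_smul, h1, mul_one, Real.norm_eq_abs, smul_smul]
    rcases abs_cases t with ⟨he, _⟩ | ⟨he, _⟩ <;> rw [he] <;>
      [skip; rw [Real.cos_neg, Real.sin_neg]] <;> congr 1 <;> field_simp

lemma norm_one_of_normSq (v : ℍ[ℝ]) (h : Quaternion.normSq v = 1) : ‖v‖ = 1 := by
  have := Quaternion.normSq_eq_norm_mul_self (a := v)
  rw [h] at this
  rcases mul_self_eq_one_iff.mp this.symm with h1 | h1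
  · exact h1
  · nlinarith [norm_nonneg v]

/-- Lemma 7.3 of the paper, bypass case: the given circle of quaternion tuples satisfies the
perturbation conditions and the bypass equations `G' = (0,0)`, and realizes the stated
characters; it parameterizes `K'_s`, the preimage of the bottom edge of the pillowcase in
`N'_s`. -/
theorem bypass_bottom_edge_parameterization (s σ : ℝ)
    (u h a f q p b : ℍ[ℝ])
    (hu : u = Real.cos σ • qk - Real.sin σ • qj)
    (hh : h = Real.cos σ • qj + Real.sin σ • qk)
    (ha : a = qi) (hf : f = qi)
    (hq : q = NormedSpace.exp (s • h))
    (hp : p = NormedSpace.exp (s • h) * NormedSpace.exp ((s * Real.cos σ) • u) *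
      NormedSpace.exp ((-s) • h))
    (hb : b = NormedSpace.exp (s • h) * NormedSpace.exp ((-σ) • u) * qi *
      NormedSpace.exp ((-s) • h)) :
    Quaternion.im (f * a⁻¹ * h) = h ∧
    q = NormedSpace.exp (s • Quaternion.im (f * a⁻¹ * h)) ∧
    p = NormedSpace.exp (s • Quaternion.im (b * h)) ∧
    (q⁻¹ * p⁻¹ * h * p * q * star h * a).re = 0 ∧
    (h * star a).re = 0 ∧
    (b * a⁻¹).re = Real.cos (2 * s) * Real.cos σ ∧
    (b * star h).re = -Real.sin σ := by
  set c := Real.cos σ with hc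
  set d := Real.sin σ with hd
  set m := Real.cos s with hm
  set n := Real.sin s with hn
  set A := Real.cos (s * c) with hA
  set B := Real.sin (s * c) with hB
  clear_value c d m n A B
  have hcd : c ^ 2 + d ^ 2 = 1 := by rw [hc, hd]; exact Real.cos_sq_add_sin_sq σ
  have hmn : m ^ 2 + n ^ 2 = 1 := by rw [hm, hn]; exact Real.cos_sq_add_sin_sq s
  have hAB : A ^ 2 + B ^ 2 = 1 := by rw [hA, hB]; exact Real.cos_sq_add_sin_sq (s * c)
  -- explicit component forms
  have hh' : h = (mkH (0) (0) (c) (d)) := by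
    rw [hh]; ext <;> simp [qj_eq, qk_eq]
  have hu' : u = (mkH (0) (0) (-d) (c)) := by
    rw [hu]; ext <;> simp [qj_eq, qk_eq]
  have hhre : h.re = 0 := by rw [hh', mkH_re]
  have hure : u.re = 0 := by rw [hu', mkH_re]
  have hhn : ‖h‖ = 1 := by
    apply norm_one_of_normSq
    rw [hh', Quaternion.normSq_def']
    simpa using hcd
  have hun : ‖u‖ = 1 := by
    apply norm_one_of_normSq
    rw [hu', Quaternion.normSq_def', mkH_re, mkH_imI, mkH_imJ, mkH_imK]
    ring_nf
    linarith [hcd]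
  -- exponentials
  have eq1 : NormedSpace.exp (s • h) = (mkH (m) (0) (n * c) (n * d)) := by
    rw [exp_pure' s h hhre hhn, hh']; ext <;> simp [hm, hn]
  have eq2 : NormedSpace.exp ((-s) • h) = (mkH (m) (0) (-(n * c)) (-(n * d))) := by
    rw [exp_pure' (-s) h hhre hhn, hh', Real.cos_neg, Real.sin_neg]
    ext <;> simp [hm, hn]
  have eq3 : NormedSpace.exp ((s * c) • u) = (mkH (A) (0) (-(B * d)) (B * c)) := by
    rw [exp_pure' (s * c) u hure hun, hu']; ext <;> simp [hA, hB] <;> ring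
  have eq4 : NormedSpace.exp ((-σ) • u) = (mkH (c) (0) (d * d) (-(d * c))) := by
    rw [exp_pure' (-σ) u hure hun, hu', Real.cos_neg, Real.sin_neg]
    ext <;> simp [hc, hd]
  -- literal values
  have hq' : q = (mkH (m) (0) (n * c) (n * d)) := by rw [hq, eq1]
  have hp' : p = (mkH (A) (2*m*n*B) (d*B - 2*d*m^2*B) (-(c*B) + 2*c*m^2*B)) := by
    rw [hp, eq1, eq2, eq3]
    ext <;> simp <;>
      [linear_combination (n^2*A)*hcd + (A)*hmn;
       linear_combination (2*m*n*B)*hcd;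
       linear_combination (d*n^2*B)*hcd + (d*B)*hmn;
       linear_combination (-c*n^2*B)*hcd + (-c*B)*hmn]
  have hb' : b = (mkH (0) (-c + 2*c*m^2) (-(c*d) + 2*c*d*m*n) (c^2 - 1 - 2*c^2*m*n)) := by
    rw [hb, eq1, eq2, eq4]
    ext <;> simp [qi_eq] <;>
      [ring;
       linear_combination (-c*n^2)*hcd + (-c)*hmn;
       linear_combination (-c*d*n^2)*hcd + (-c*d)*hmn;
       linear_combination (-1 - d^2*n^2 + c^2 - c^2*n^2 - c^2*m^2)*hcd + (-d^2 - c^2 + c^2*d^2 + c^4)*hmn]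
  -- inverses
  have hainv : a⁻¹ = -a := by
    rw [ha]
    refine inv_eq_of_mul_eq_one_left ?_
    ext <;> simp [qi_eq]
  have hqinv : q⁻¹ = (mkH (m) (0) (-(n * c)) (-(n * d))) := by
    refine inv_eq_of_mul_eq_one_left ?_
    rw [hq']
    ext <;> simp <;> [linear_combination (n^2)*hcd + (1)*hmn; ring; ring; ring]
  have hpinv : p⁻¹ = (mkH (A) (-(2*m*n*B)) (-(d*B - 2*d*m^2*B)) (-(-(c*B) + 2*c*m^2*B))) := by
    refine inv_eq_of_mul_eq_one_left ?_
    rw [hp']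
    ext <;> simp <;>
      [linear_combination (B^2 - 4*m^2*B^2 + 4*m^4*B^2)*hcd + (4*m^2*B^2)*hmn + (1)*hAB;
       ring; ring; ring]
  -- item 1
  have item1 : Quaternion.im (f * a⁻¹ * h) = h := by
    rw [hf, hainv, ha, hh']
    ext <;> simp [qi_eq]
  refine ⟨item1, ?_, ?_, ?_, ?_, ?_, ?_⟩
  · rw [item1]; exact hq
  · -- item 3 : p = exp (s • im (b*h))
    have hw0 : (mkH (0) (2*m*n) (d - 2*d*m^2) (-c + 2*c*m^2)).re = 0 := rfl
    have hwn := norm_one_of_normSq (mkH (0) (2*m*n) (d - 2*d*m^2) (-c + 2*c*m^2))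
      (by rw [Quaternion.normSq_def', mkH_re, mkH_imI, mkH_imJ, mkH_imK]; linear_combination (1 - 4*m^2 + 4*m^4)*hcd + (4*m^2)*hmn)
    have him : Quaternion.im (b * h) = c • (mkH (0) (2*m*n) (d - 2*d*m^2) (-c + 2*c*m^2)) := by
      rw [hb', hh']
      ext <;> simp <;> [linear_combination (-c + 2*c*m*n)*hcd; ring; ring]
    rw [him, smul_smul, exp_pure' (s * c) _ hw0 hwn, hp']
    ext <;> simp [hA, hB] <;> ring
  · rw [hqinv, hpinv, hp', hq', hh', ha]
    simp [qi_eq]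
    linear_combination (4*d^2*m*n*A*B - 4*d^2*m*n^3*A*B - 8*d^2*m^3*n*A*B + 8*c^2*m*n*A*B - 8*c^2*m*n^3*A*B - 12*c^2*m^3*n*A*B)*hcd + (-4*d^2*m*n*A*B - 8*c^2*m*n*A*B + 4*c^2*d^2*m*n*A*B + 4*c^4*m*n*A*B)*hmn
  · rw [hh', ha]; simp [qi_eq]
  · rw [hb', hainv, ha, Real.cos_two_mul]
    simp [qi_eq, ← hm]
    ring
  · rw [hb', hh']
    simp
    ring
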